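/- Let A and B be symmetric positive definite d×d real matrices with unique positive definite square roots A^{1/2} and B^{1/2}. Then |A^{1/2} - B^{1/2}| ≤ |A - B| / (λ_min(A^{1/2}) + λ_min(B^{1/2})), where |·| denotes the Frobenius norm. -/

import Mathlib

/-- Frobenius norm of a square real matrix. -/
noncomputable def frob {d : ℕ} (A : Matrix (Fin d) (Fin d) ℝ) : ℝ :=
  Real.sqrt (∑ i, ∑ j, (A i j) ^ 2)

open Matrix Finset

lemma quad_form_ge {d : ℕ} {S : Matrix (Fin d) (Fin d) ℝ} (hS : S.PosDef)
    {l : ℝ} (hl : ∀ i, l ≤ hS.1.eigenvalues i) (x : Fin d → ℝ) :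
    l * (∑ i, x i ^ 2) ≤ x ⬝ᵥ (S *ᵥ x) := by
  classical
  set U : Matrix (Fin d) (Fin d) ℝ := (hS.1.eigenvectorUnitary : Matrix (Fin d) (Fin d) ℝ) with hUdef
  have hU : U * star U = 1 := (Matrix.mem_unitaryGroup_iff).mp (hS.1.eigenvectorUnitary).2
  have h1 : S - l • (1 : Matrix (Fin d) (Fin d) ℝ)
      = U * (Matrix.diagonal (fun i => hS.1.eigenvalues i - l)) * star U := by
    have hspec : S = U * Matrix.diagonal ((RCLike.ofReal : ℝ → ℝ) ∘ hS.1.eigenvalues) * star U :=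
      hS.1.spectral_theorem
    have h2 : (Matrix.diagonal fun i => hS.1.eigenvalues i - l)
        = Matrix.diagonal ((RCLike.ofReal : ℝ → ℝ) ∘ hS.1.eigenvalues) - l • 1 := by
      ext i j
      by_cases h : i = j <;>
        simp [Matrix.diagonal_apply, Matrix.one_apply, h]
    rw [h2, Matrix.mul_sub, Matrix.sub_mul, ← hspec]
    congr 1
    rw [Matrix.mul_smul, Matrix.mul_one, Matrix.smul_mul, hU]
  have hsub : (S - l • (1 : Matrix (Fin d) (Fin d) ℝ)).PosSemidef := by
    rw [h1, Matrix.star_eq_conjTranspose]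
    exact (Matrix.PosSemidef.diagonal (fun i => sub_nonneg.2 (hl i))).mul_mul_conjTranspose_same U
  have h3 := hsub.dotProduct_mulVec_nonneg x
  have hstar : (star x : Fin d → ℝ) = x := by simp
  rw [hstar, Matrix.sub_mulVec, dotProduct_sub, Matrix.smul_mulVec, Matrix.one_mulVec,
    dotProduct_smul] at h3
  have h4 : x ⬝ᵥ x = ∑ i, x i ^ 2 := by simp [dotProduct, sq]
  rw [h4] at h3
  simp only [smul_eq_mul] at h3
  linarith

lemma frob_nonneg {d : ℕ} (A : Matrix (Fin d) (Fin d) ℝ) : 0 ≤ frob A :=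
  Real.sqrt_nonneg _

lemma frob_sq {d : ℕ} (A : Matrix (Fin d) (Fin d) ℝ) :
    frob A ^ 2 = ∑ i, ∑ j, (A i j) ^ 2 := by
  rw [frob, Real.sq_sqrt]
  exact Finset.sum_nonneg fun i _ => Finset.sum_nonneg fun j _ => sq_nonneg _

lemma frob_cauchy_schwarz {d : ℕ} (M N : Matrix (Fin d) (Fin d) ℝ) :
    (∑ i, ∑ j, M i j * N i j) ≤ frob M * frob N := by
  have key : ∀ (P : Matrix (Fin d) (Fin d) ℝ) (f : Fin d → Fin d → ℝ),
      (∑ p : Fin d × Fin d, f p.1 p.2) = ∑ i, ∑ j, f i j := by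
    intro P f
    rw [← Finset.univ_product_univ, Finset.sum_product]
  have h := Finset.sum_mul_sq_le_sq_mul_sq Finset.univ
    (fun p : Fin d × Fin d => M p.1 p.2) (fun p : Fin d × Fin d => N p.1 p.2)
  rw [key M (fun i j => M i j * N i j), key M (fun i j => M i j ^ 2),
    key N (fun i j => N i j ^ 2)] at h
  calc (∑ i, ∑ j, M i j * N i j) ≤ |∑ i, ∑ j, M i j * N i j| := le_abs_self _
    _ = Real.sqrt ((∑ i, ∑ j, M i j * N i j) ^ 2) := (Real.sqrt_sq_eq_abs _).symm
    _ ≤ Real.sqrt ((∑ i, ∑ j, M i j ^ 2) * (∑ i, ∑ j, N i j ^ 2)) := Real.sqrt_le_sqrt h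
    _ = frob M * frob N := by
        rw [frob, frob, ← Real.sqrt_mul]
        exact Finset.sum_nonneg fun i _ => Finset.sum_nonneg fun j _ => sq_nonneg _

theorem sqrt_perturbation_bound {d : ℕ} (hd : 0 < d)
    (A B S T : Matrix (Fin d) (Fin d) ℝ)
    (hA : A.PosDef) (hB : B.PosDef) (hS : S.PosDef) (hT : T.PosDef)
    (hS2 : S * S = A) (hT2 : T * T = B) :
    frob (S - T) ≤
      frob (A - B) /
        (Finset.univ.inf' ⟨⟨0, hd⟩, Finset.mem_univ _⟩ hS.1.eigenvalues +
          Finset.univ.inf' ⟨⟨0, hd⟩, Finset.mem_univ _⟩ hT.1.eigenvalues) := by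
  classical
  set lS := Finset.univ.inf' ⟨⟨0, hd⟩, Finset.mem_univ _⟩ hS.1.eigenvalues with hlS
  set lT := Finset.univ.inf' ⟨⟨0, hd⟩, Finset.mem_univ _⟩ hT.1.eigenvalues with hlT
  set E : Matrix (Fin d) (Fin d) ℝ := S - T with hE
  have hlSpos : 0 < lS := by
    rw [hlS]; apply (Finset.lt_inf'_iff _).2
    exact fun i _ => hS.eigenvalues_pos i
  have hlTpos : 0 < lT := by
    rw [hlT]; apply (Finset.lt_inf'_iff _).2
    exact fun i _ => hT.eigenvalues_pos i
  have hc : 0 < lS + lT := by linarith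
  have hlSle : ∀ i, lS ≤ hS.1.eigenvalues i := fun i => Finset.inf'_le _ (Finset.mem_univ i)
  have hlTle : ∀ i, lT ≤ hT.1.eigenvalues i := fun i => Finset.inf'_le _ (Finset.mem_univ i)
  -- symmetry of T
  have hTsym : ∀ a b, T a b = T b a := by
    intro a b
    have := congrFun (congrFun hT.1 a) b
    simpa [Matrix.conjTranspose_apply] using this.symm
  -- A - B = S*E + E*T
  have hAB : A - B = S * E + E * T := by
    rw [← hS2, ← hT2, hE]
    noncomm_ring
  set Q : ℝ := ∑ i, ∑ j, (E i j) ^ 2 with hQ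
  have hQnonneg : 0 ≤ Q :=
    Finset.sum_nonneg fun i _ => Finset.sum_nonneg fun j _ => sq_nonneg _
  -- part 1
  have h1 : lS * Q ≤ ∑ i, ∑ j, E i j * (S * E) i j := by
    rw [Finset.sum_comm]
    have : ∀ j, lS * (∑ i, (E i j) ^ 2) ≤ ∑ i, E i j * (S * E) i j := by
      intro j
      have := quad_form_ge hS hlSle (fun i => E i j)
      simpa [dotProduct, Matrix.mulVec, Matrix.mul_apply, Finset.mul_sum] using this
    calc lS * Q = ∑ j, lS * (∑ i, (E i j) ^ 2) := by
          rw [hQ, Finset.sum_comm, Finset.mul_sum]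
      _ ≤ ∑ j, ∑ i, E i j * (S * E) i j := Finset.sum_le_sum fun j _ => this j
  -- part 2
  have h2 : lT * Q ≤ ∑ i, ∑ j, E i j * (E * T) i j := by
    have : ∀ i, lT * (∑ j, (E i j) ^ 2) ≤ ∑ j, E i j * (E * T) i j := by
      intro i
      have h := quad_form_ge hT hlTle (fun k => E i k)
      have hrw : (fun k => E i k) ⬝ᵥ (T *ᵥ fun k => E i k)
          = ∑ j, E i j * (E * T) i j := by
        simp only [dotProduct, Matrix.mulVec, Matrix.mul_apply, dotProduct]
        refine Finset.sum_congr rfl fun j _ => ?_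
        rw [Finset.mul_sum, Finset.mul_sum]
        refine Finset.sum_congr rfl fun k _ => ?_
        rw [hTsym j k]; ring
      rw [hrw] at h
      exact h
    calc lT * Q = ∑ i, lT * (∑ j, (E i j) ^ 2) := by rw [hQ, Finset.mul_sum]
      _ ≤ ∑ i, ∑ j, E i j * (E * T) i j := Finset.sum_le_sum fun i _ => this i
  -- combine
  have hip : (lS + lT) * Q ≤ ∑ i, ∑ j, E i j * (A - B) i j := by
    have hsplit : (∑ i, ∑ j, E i j * (A - B) i j)
        = (∑ i, ∑ j, E i j * (S * E) i j) + ∑ i, ∑ j, E i j * (E * T) i j := by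
      rw [hAB]
      rw [← Finset.sum_add_distrib]
      refine Finset.sum_congr rfl fun i _ => ?_
      rw [← Finset.sum_add_distrib]
      refine Finset.sum_congr rfl fun j _ => ?_
      simp [Matrix.add_apply, mul_add]
    rw [hsplit]
    have := add_le_add h1 h2
    linarith
  have hCS : (∑ i, ∑ j, E i j * (A - B) i j) ≤ frob E * frob (A - B) :=
    frob_cauchy_schwarz E (A - B)
  have hQE : Q = frob E ^ 2 := (frob_sq E).symm
  rw [le_div_iff₀ hc]
  have key : (lS + lT) * frob E ^ 2 ≤ frob E * frob (A - B) := by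
    rw [← hQE]; exact le_trans hip hCS
  rcases (frob_nonneg E).eq_or_lt with h0 | h0
  · rw [← h0, zero_mul]; exact frob_nonneg _
  · nlinarith [key, h0]
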